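/- Let T > 0 and (Q_k)_{k≥0} the orthonormal polynomials on [0,T]. Then for every k ≥ 0, the coefficient c_{k,k+1} = ∫₀ᵀ (∫₀ᵗ Q_k(s) ds) Q_{k+1}(t) dt equals T·α_k where α_k = 1/(2√((2k+1)(2k+3))). -/

import Mathlib

open Polynomial MeasureTheory intervalIntegral

noncomputable section Stmt3Aux

lemma poly_ibp (p q : Polynomial ℝ) (a b : ℝ) :
    ∫ x in a..b, p.eval x * (derivative q).eval x
      = p.eval b * q.eval b - p.eval a * q.eval a
        - ∫ x in a..b, (derivative p).eval x * q.eval x := by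
  exact intervalIntegral.integral_mul_deriv_eq_deriv_mul
    (fun x _ => p.hasDerivAt x) (fun x _ => q.hasDerivAt x)
    ((derivative p).continuous_aeval.intervalIntegrable _ _)
    ((derivative q).continuous_aeval.intervalIntegrable _ _)

lemma pint (p q : Polynomial ℝ) (a b : ℝ) :
    IntervalIntegrable (fun x => p.eval x * q.eval x) volume a b :=
  (p.continuous_aeval.mul q.continuous_aeval).intervalIntegrable _ _

/-- Rodrigues weight `(x(x-T))^k`. -/
def wp (T : ℝ) (k : ℕ) : Polynomial ℝ := (X * (X - C T)) ^ k

/-- Rodrigues polynomial: k-th derivative of the weight. -/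
def Rp (T : ℝ) (k : ℕ) : Polynomial ℝ := derivative^[k] (wp T k)

lemma wp_monic (T : ℝ) (k : ℕ) : (wp T k).Monic :=
  (monic_X.mul (monic_X_sub_C T)).pow k

lemma wp_natDegree (T : ℝ) (k : ℕ) : (wp T k).natDegree = 2 * k := by
  have h : (X * (X - C T) : Polynomial ℝ).natDegree = 2 := by
    rw [natDegree_mul X_ne_zero (X_sub_C_ne_zero T), natDegree_X, natDegree_X_sub_C]
  rw [wp, natDegree_pow, h]; ring

lemma Rp_coeff (T : ℝ) (k : ℕ) :
    (Rp T k).coeff k = ((2 * k).descFactorial k : ℝ) := by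
  rw [Rp, coeff_iterate_derivative]
  have : (wp T k).coeff (k + k) = 1 := by
    have := (wp_monic T k).coeff_natDegree
    rwa [wp_natDegree, two_mul] at this
  rw [this]
  simp [two_mul]

lemma Rp_natDegree (T : ℝ) (k : ℕ) : (Rp T k).natDegree = k := by
  apply le_antisymm
  · have := Polynomial.natDegree_iterate_derivative (wp T k) k
    rwa [wp_natDegree, two_mul, Nat.add_sub_cancel] at this
  · apply le_natDegree_of_ne_zero
    rw [Rp_coeff]
    have : 0 < (2 * k).descFactorial k :=
      Nat.pos_of_ne_zero (by simp only [ne_eq, Nat.descFactorial_eq_zero_iff_lt]; omega)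
    positivity

lemma Rp_coeff_pos (T : ℝ) (k : ℕ) : 0 < (Rp T k).coeff k := by
  rw [Rp_coeff]
  have : 0 < (2 * k).descFactorial k :=
    Nat.pos_of_ne_zero (by simp only [ne_eq, Nat.descFactorial_eq_zero_iff_lt]; omega)
  positivity

/-- derivatives of order `< k` of the weight vanish at `0` and `T`. -/
lemma wp_deriv_root (T : ℝ) (k m : ℕ) (hm : m < k) :
    (derivative^[m] (wp T k)).eval 0 = 0 ∧ (derivative^[m] (wp T k)).eval T = 0 := by
  have h0 : (X : Polynomial ℝ) ^ k ∣ wp T k := by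
    rw [wp, mul_pow]; exact dvd_mul_right _ _
  have hT : (X - C T) ^ k ∣ wp T k := by
    rw [wp, mul_pow]; exact dvd_mul_left _ _
  constructor
  · obtain ⟨r, hr⟩ := Polynomial.pow_sub_dvd_iterate_derivative_of_pow_dvd m h0
    rw [hr]
    simp [zero_pow (by omega : k - m ≠ 0)]
  · obtain ⟨r, hr⟩ := Polynomial.pow_sub_dvd_iterate_derivative_of_pow_dvd m hT
    rw [hr]
    simp [zero_pow (by omega : k - m ≠ 0)]

lemma ibp_iter (T : ℝ) (k : ℕ) (p : Polynomial ℝ) :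
    ∀ j, j ≤ k → ∫ x in (0:ℝ)..T, p.eval x * (Rp T k).eval x
      = (-1)^j * ∫ x in (0:ℝ)..T, (derivative^[j] p).eval x * (derivative^[k-j] (wp T k)).eval x := by
  intro j
  induction j with
  | zero => intro _; simp [Rp]
  | succ j ih =>
    intro hj
    rw [ih (by omega)]
    have hsplit : derivative^[k-j] (wp T k) = derivative (derivative^[k-(j+1)] (wp T k)) := by
      have hkj : k - j = (k - (j+1)) + 1 := by omega
      rw [hkj, Function.iterate_succ_apply']
    rw [hsplit, poly_ibp]
    have h1 := (wp_deriv_root T k (k-(j+1)) (by omega)).1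
    have h2 := (wp_deriv_root T k (k-(j+1)) (by omega)).2
    rw [Function.iterate_succ_apply' derivative j p]
    simp only [h1, h2, mul_zero, zero_sub, sub_zero, zero_mul]
    ring

lemma Rp_ortho (T : ℝ) {j k : ℕ} (h : j < k) :
    ∫ x in (0:ℝ)..T, (Rp T j).eval x * (Rp T k).eval x = 0 := by
  rw [ibp_iter T k (Rp T j) k le_rfl]
  have : derivative^[k] (Rp T j) = 0 :=
    Polynomial.iterate_derivative_eq_zero (by rw [Rp_natDegree]; exact h)
  rw [this]
  simp

lemma beta_int (T : ℝ) : ∀ b a : ℕ,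
    ∫ x in (0:ℝ)..T, x ^ a * (x - T) ^ b
      = (-1) ^ b * ((a.factorial * b.factorial : ℝ) / (a + b + 1).factorial) * T ^ (a + b + 1) := by
  intro b
  induction b with
  | zero =>
    intro a
    have h5 : ((a:ℝ)+1) ≠ 0 := by positivity
    have h4 : (a.factorial : ℝ) ≠ 0 := by positivity
    simp only [pow_zero, mul_one, one_mul, Nat.add_zero, integral_pow, Nat.factorial_succ]
    push_cast
    rw [zero_pow (by omega : a+1 ≠ 0)]
    field_simp
    ring
  | succ b ih =>
    intro a
    have hu : ∀ x ∈ Set.uIcc (0:ℝ) T, HasDerivAt (fun y => (y - T)^(b+1)) (((b:ℝ)+1) * (x - T)^b) x := by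
      intro x _
      have := ((hasDerivAt_id x).sub_const T).pow (b+1)
      simp at this; exact this
    have hv : ∀ x ∈ Set.uIcc (0:ℝ) T, HasDerivAt (fun y => y^(a+1) / ((a:ℝ)+1)) (x ^ a) x := by
      intro x _
      have h := (hasDerivAt_pow (a+1) x).div_const ((a:ℝ)+1)
      convert h using 1
      have : ((a:ℝ)+1) ≠ 0 := by positivity
      · rfl
      · rfl
      rw [eq_div_iff (by positivity : ((a:ℝ)+1) ≠ 0), Nat.add_sub_cancel]; push_cast; ring
    have hiu : IntervalIntegrable (fun x => ((b:ℝ)+1) * (x - T)^b) volume 0 T := by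
      apply Continuous.intervalIntegrable; continuity
    have hiv : IntervalIntegrable (fun x : ℝ => x ^ a) volume 0 T := by
      apply Continuous.intervalIntegrable; continuity
    have key := intervalIntegral.integral_mul_deriv_eq_deriv_mul hu hv hiu hiv
    have e1 : ∫ x in (0:ℝ)..T, x ^ a * (x - T) ^ (b+1)
        = ∫ x in (0:ℝ)..T, (x - T) ^ (b+1) * x ^ a := by
      simp_rw [mul_comm]
    have e2 : ∫ x in (0:ℝ)..T, ((b:ℝ)+1) * (x - T)^b * (x^(a+1) / ((a:ℝ)+1))
        = (((b:ℝ)+1) / ((a:ℝ)+1)) * ∫ x in (0:ℝ)..T, x^(a+1) * (x - T)^b := by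
      rw [← intervalIntegral.integral_const_mul]
      congr 1; funext x; ring
    rw [e1, key, e2, ih (a+1)]
    have hfac : ((a + 1 + b + 1).factorial : ℝ) = ((a + (b+1) + 1).factorial : ℝ) := by
      norm_num; congr 1; omega
    rw [hfac]
    have h2 : ((a+1).factorial : ℝ) = ((a:ℝ)+1) * a.factorial := by
      push_cast [Nat.factorial_succ]; ring
    have h3 : (((b+1)).factorial : ℝ) = ((b:ℝ)+1) * b.factorial := by
      push_cast [Nat.factorial_succ]; ring
    have h4 : ((a + (b+1) + 1).factorial : ℝ) ≠ 0 := by positivity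
    have h5 : ((a:ℝ)+1) ≠ 0 := by positivity
    have h6 : (a + (b+1) + 1 : ℕ) = a + b + 2 := by omega
    simp only [h2, h3]
    have hT0 : ((T:ℝ) - T) ^ (b+1) = 0 := by simp
    rw [hT0]
    have h0 : (0:ℝ) ^ (a+1) = 0 := by simp
    rw [h0]
    have hpow : T ^ (a + 1 + b + 1) = T ^ (a + (b+1) + 1) := by congr 1; omega
    rw [hpow]
    field_simp
    ring


lemma Rp_norm (T : ℝ) (k : ℕ) :
    ∫ x in (0:ℝ)..T, (Rp T k).eval x * (Rp T k).eval x
      = ((k.factorial : ℝ))^2 * T^(2*k+1) / (2*(k:ℝ)+1) := by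
  rw [ibp_iter T k (Rp T k) k le_rfl]
  have hD : derivative^[k] (Rp T k) = C (((2*k).factorial : ℝ)) := by
    rw [Rp, ← Function.iterate_add_apply]
    have hdeg : (derivative^[k+k] (wp T k)).natDegree ≤ 0 := by
      have := Polynomial.natDegree_iterate_derivative (wp T k) (k+k)
      rwa [wp_natDegree, two_mul, Nat.sub_self] at this
    rw [Polynomial.eq_C_of_natDegree_le_zero hdeg]
    congr 1
    rw [coeff_iterate_derivative]
    have hc : (wp T k).coeff (0 + (k+k)) = 1 := by
      have := (wp_monic T k).coeff_natDegree
      rwa [wp_natDegree, two_mul, ← Nat.zero_add (k+k)] at this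
    rw [hc]
    simp [Nat.descFactorial_self, two_mul]
  rw [Nat.sub_self, hD]
  simp only [Function.iterate_zero, id_eq, eval_C]
  have hw : ∀ x : ℝ, (wp T k).eval x = x^k * (x - T)^k := by
    intro x; simp [wp, mul_pow]
  have e1 : ∫ x in (0:ℝ)..T, ((2*k).factorial : ℝ) * (wp T k).eval x
      = ((2*k).factorial : ℝ) * ∫ x in (0:ℝ)..T, x^k * (x - T)^k := by
    rw [← intervalIntegral.integral_const_mul]
    congr 1; funext x; rw [hw]
  rw [e1, beta_int T k k]
  have h1 : ((k + k + 1).factorial : ℝ) = (2*(k:ℝ)+1) * (2*k).factorial := by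
    have : k + k + 1 = (2*k) + 1 := by omega
    rw [this, Nat.factorial_succ]
    push_cast; ring
  rw [h1]
  have h2 : (0:ℝ) < 2*(k:ℝ)+1 := by positivity
  have h3 : ((2*k).factorial : ℝ) ≠ 0 := by positivity
  have h4 : T ^ (k + k + 1) = T ^ (2*k+1) := by congr 1; omega
  rw [h4]
  field_simp
  ring_nf
  simp only [pow_mul', neg_one_sq, one_pow]
  ring

/-- normalization constant -/
def nuc (T : ℝ) (k : ℕ) : ℝ := Real.sqrt ((2*(k:ℝ)+1)/T) / (T^k * (k.factorial:ℝ))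

/-- the explicit orthonormal polynomials -/
def Qh (T : ℝ) (k : ℕ) : Polynomial ℝ := C (nuc T k) * Rp T k

lemma nuc_pos {T : ℝ} (hT : 0 < T) (k : ℕ) : 0 < nuc T k := by
  have h1 : (0:ℝ) < (2*(k:ℝ)+1)/T := by positivity
  have h2 : (0:ℝ) < T^k * (k.factorial:ℝ) := by positivity
  exact div_pos (Real.sqrt_pos.mpr h1) h2

lemma Qh_natDegree {T : ℝ} (hT : 0 < T) (k : ℕ) : (Qh T k).natDegree = k := by
  rw [Qh, natDegree_C_mul (ne_of_gt (nuc_pos hT k)), Rp_natDegree]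

lemma Qh_coeff {T : ℝ} (k : ℕ) :
    (Qh T k).coeff k = nuc T k * ((2 * k).descFactorial k : ℝ) := by
  rw [Qh, coeff_C_mul, Rp_coeff]

lemma Qh_lead {T : ℝ} (hT : 0 < T) (k : ℕ) : 0 < (Qh T k).leadingCoeff := by
  rw [leadingCoeff, Qh_natDegree hT, Qh, coeff_C_mul]
  exact mul_pos (nuc_pos hT k) (Rp_coeff_pos T k)

lemma Qh_int (T : ℝ) (j k : ℕ) :
    ∫ x in (0:ℝ)..T, (Qh T j).eval x * (Qh T k).eval x
      = nuc T j * nuc T k * ∫ x in (0:ℝ)..T, (Rp T j).eval x * (Rp T k).eval x := by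
  rw [← intervalIntegral.integral_const_mul]
  congr 1; funext x
  simp only [Qh, eval_mul, eval_C]; ring

lemma Qh_orth {T : ℝ} (hT : 0 < T) (j k : ℕ) :
    ∫ x in (0:ℝ)..T, (Qh T j).eval x * (Qh T k).eval x = if j = k then 1 else 0 := by
  rcases lt_trichotomy j k with h | h | h
  · rw [Qh_int, Rp_ortho T h, if_neg (by omega)]
    ring
  · subst h
    rw [Qh_int, Rp_norm, if_pos rfl]
    have hs : Real.sqrt ((2*(j:ℝ)+1)/T) * Real.sqrt ((2*(j:ℝ)+1)/T) = (2*(j:ℝ)+1)/T := by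
      exact Real.mul_self_sqrt (by positivity)
    have h2 : (0:ℝ) < 2*(j:ℝ)+1 := by positivity
    have h3 : ((j).factorial : ℝ) ≠ 0 := by positivity
    have hTk : T ^ j ≠ 0 := by positivity
    have hT' : T ≠ 0 := ne_of_gt hT
    have hp : T ^ (2*j+1) = T^j * T^j * T := by
      rw [← pow_add, ← pow_succ]; congr 1; omega
    have key : nuc T j * nuc T j = ((2*(j:ℝ)+1)/T) / ((T^j * (j.factorial:ℝ))^2) := by
      rw [nuc, div_mul_div_comm, hs, ← sq]
    rw [key, hp]
    field_simp
  · rw [Qh_int]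
    have : ∫ x in (0:ℝ)..T, (Rp T j).eval x * (Rp T k).eval x
        = ∫ x in (0:ℝ)..T, (Rp T k).eval x * (Rp T j).eval x := by
      congr 1; funext x; ring
    rw [this, Rp_ortho T h, if_neg (by omega)]
    ring

lemma pint' (p q : Polynomial ℝ) (a b : ℝ) :
    IntervalIntegrable (fun x => p.eval x * q.eval x) volume a b :=
  (p.continuous_aeval.mul q.continuous_aeval).intervalIntegrable _ _

lemma int_add_smul (c : ℝ) (q r s : Polynomial ℝ) (a b : ℝ) :
    ∫ x in a..b, (q + C c * r).eval x * s.eval x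
      = (∫ x in a..b, q.eval x * s.eval x) + c * ∫ x in a..b, r.eval x * s.eval x := by
  rw [← intervalIntegral.integral_const_mul,
    ← intervalIntegral.integral_add (pint' q s a b) ((pint' r s a b).const_mul c)]
  congr 1; funext x
  simp only [eval_add, eval_mul, eval_C]; ring

section Abstract

variable {T : ℝ} {Q : ℕ → Polynomial ℝ}

lemma coeff_pos' (hQdeg : ∀ k, (Q k).natDegree = k)
    (hQlead : ∀ k, 0 < (Q k).leadingCoeff) (k : ℕ) : 0 < (Q k).coeff k := by
  have := hQlead k
  rwa [leadingCoeff, hQdeg k] at this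

lemma orth_low (hQdeg : ∀ k, (Q k).natDegree = k)
    (hQlead : ∀ k, 0 < (Q k).leadingCoeff)
    (hQorth : ∀ j k, ∫ x in (0:ℝ)..T, (Q j).eval x * (Q k).eval x = if j = k then 1 else 0) :
    ∀ (k : ℕ) (p : Polynomial ℝ), (∀ m, k ≤ m → p.coeff m = 0) →
      ∀ l, k ≤ l → ∫ x in (0:ℝ)..T, p.eval x * (Q l).eval x = 0 := by
  intro k
  induction k with
  | zero =>
    intro p hp l _
    have hp0 : p = 0 := Polynomial.ext fun m => by simpa using hp m (Nat.zero_le m)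
    simp [hp0]
  | succ k ih =>
    intro p hp l hl
    have hlam : (Q k).coeff k ≠ 0 := ne_of_gt (coeff_pos' hQdeg hQlead k)
    set c := p.coeff k / (Q k).coeff k with hc
    set q := p - C c * Q k with hq
    have hqc : ∀ m, k ≤ m → q.coeff m = 0 := by
      intro m hm
      rcases eq_or_lt_of_le hm with rfl | hlt
      · simp only [hq, coeff_sub, coeff_C_mul, hc]
        field_simp
        ring
      · have h1 : p.coeff m = 0 := hp m (by omega)
        have h2 : (Q k).coeff m = 0 := coeff_eq_zero_of_natDegree_lt (by rw [hQdeg]; omega)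
        simp [hq, coeff_sub, coeff_C_mul, h1, h2]
    have hsplit : p = q + C c * Q k := by rw [hq]; ring
    rw [hsplit, int_add_smul, ih q hqc l (by omega), hQorth k l, if_neg (by omega)]
    ring

lemma coeff_int (hQdeg : ∀ k, (Q k).natDegree = k)
    (hQlead : ∀ k, 0 < (Q k).leadingCoeff)
    (hQorth : ∀ j k, ∫ x in (0:ℝ)..T, (Q j).eval x * (Q k).eval x = if j = k then 1 else 0)
    (k : ℕ) (p : Polynomial ℝ) (hp : p.natDegree ≤ k) :
    ∫ x in (0:ℝ)..T, p.eval x * (Q k).eval x = p.coeff k / (Q k).coeff k := by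
  have hlam : (Q k).coeff k ≠ 0 := ne_of_gt (coeff_pos' hQdeg hQlead k)
  set c := p.coeff k / (Q k).coeff k with hc
  set q := p - C c * Q k with hq
  have hqc : ∀ m, k ≤ m → q.coeff m = 0 := by
    intro m hm
    rcases eq_or_lt_of_le hm with rfl | hlt
    · simp only [hq, coeff_sub, coeff_C_mul, hc]
      field_simp
      ring
    · have h1 : p.coeff m = 0 := coeff_eq_zero_of_natDegree_lt (by omega)
      have h2 : (Q k).coeff m = 0 := coeff_eq_zero_of_natDegree_lt (by rw [hQdeg]; omega)
      simp [hq, coeff_sub, coeff_C_mul, h1, h2]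
  have hsplit : p = q + C c * Q k := by rw [hq]; ring
  rw [hsplit, int_add_smul, orth_low hQdeg hQlead hQorth k q hqc k le_rfl,
    hQorth k k, if_pos rfl]
  ring

end Abstract

lemma sq_int_zero {T : ℝ} (hT : 0 < T) (p : Polynomial ℝ)
    (h : ∫ x in (0:ℝ)..T, p.eval x * p.eval x = 0) : p = 0 := by
  by_contra hp
  rw [intervalIntegral.integral_of_le hT.le] at h
  have hnn : 0 ≤ᵐ[volume.restrict (Set.Ioc (0:ℝ) T)] fun x => p.eval x * p.eval x :=
    Filter.Eventually.of_forall fun x => mul_self_nonneg _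
  have hint : IntegrableOn (fun x => p.eval x * p.eval x) (Set.Ioc (0:ℝ) T) volume :=
    (pint' p p 0 T).1
  have hae := (MeasureTheory.setIntegral_eq_zero_iff_of_nonneg_ae hnn hint).1 h
  have hsub : ∀ᵐ x ∂(volume.restrict (Set.Ioc (0:ℝ) T)), p.IsRoot x := by
    filter_upwards [hae] with x hx
    exact mul_self_eq_zero.mp hx
  have hres : (volume.restrict (Set.Ioc (0:ℝ) T)) {x | ¬ p.IsRoot x} = 0 :=
    MeasureTheory.ae_iff.mp hsub
  have hmeasset : MeasurableSet {x : ℝ | ¬ p.IsRoot x} := by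
    have : IsClosed {x : ℝ | p.IsRoot x} :=
      isClosed_eq p.continuous_aeval continuous_const
    exact this.measurableSet.compl
  rw [MeasureTheory.Measure.restrict_apply hmeasset] at hres
  have hroots : volume {x : ℝ | p.IsRoot x} = 0 :=
    (p.finite_setOf_isRoot hp).measure_zero _
  have hle : volume (Set.Ioc (0:ℝ) T) ≤ 0 := by
    calc volume (Set.Ioc (0:ℝ) T)
        ≤ volume ({x : ℝ | ¬ p.IsRoot x} ∩ Set.Ioc (0:ℝ) T ∪ {x : ℝ | p.IsRoot x}) := by
          apply measure_mono
          intro x hx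
          by_cases hr : p.IsRoot x
          · exact Or.inr hr
          · exact Or.inl ⟨hr, hx⟩
      _ ≤ volume ({x : ℝ | ¬ p.IsRoot x} ∩ Set.Ioc (0:ℝ) T) + volume {x : ℝ | p.IsRoot x} :=
          measure_union_le _ _
      _ = 0 := by rw [hres, hroots, add_zero]
  rw [Real.volume_Ioc] at hle
  simp only [nonpos_iff_eq_zero, ENNReal.ofReal_eq_zero, sub_zero] at hle
  linarith

/-- polynomial antiderivative vanishing at 0 -/
def antid (p : Polynomial ℝ) : Polynomial ℝ :=
  ∑ n ∈ Finset.range (p.natDegree + 1), C (p.coeff n / ((n:ℝ)+1)) * X^(n+1)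

lemma antid_deriv (p : Polynomial ℝ) : derivative (antid p) = p := by
  rw [antid, derivative_sum]
  have hterm : ∀ n ∈ Finset.range (p.natDegree+1),
      derivative (C (p.coeff n/((n:ℝ)+1)) * X^(n+1)) = C (p.coeff n) * X^n := by
    intro n _
    rw [derivative_C_mul, derivative_X_pow]
    simp only [Nat.add_sub_cancel]
    rw [← mul_assoc, ← C_mul]
    have hne : ((n:ℝ)+1) ≠ 0 := by positivity
    push_cast
    rw [div_mul_cancel₀ _ hne]
  rw [Finset.sum_congr rfl hterm]
  conv_rhs => rw [p.as_sum_range' (p.natDegree + 1) (Nat.lt_succ_self _)]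
  simp [C_mul_X_pow_eq_monomial]

lemma antid_eval_zero (p : Polynomial ℝ) : (antid p).eval 0 = 0 := by
  simp [antid, eval_finset_sum]

lemma antid_natDegree (p : Polynomial ℝ) : (antid p).natDegree ≤ p.natDegree + 1 := by
  apply Polynomial.natDegree_sum_le_of_forall_le
  intro n hn
  refine (Polynomial.natDegree_C_mul_le _ _).trans ?_
  rw [natDegree_X_pow]
  exact Nat.succ_le_succ (Finset.mem_range_succ_iff.mp hn)

lemma antid_coeff (p : Polynomial ℝ) (k : ℕ) (h : p.natDegree = k) :
    (antid p).coeff (k+1) = p.coeff k / ((k:ℝ)+1) := by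
  rw [antid, finset_sum_coeff]
  rw [Finset.sum_eq_single_of_mem k (by rw [h]; exact Finset.self_mem_range_succ _)]
  · rw [coeff_C_mul, coeff_X_pow, if_pos rfl, mul_one]
  · intro n _ hn
    rw [coeff_C_mul, coeff_X_pow, if_neg (by omega), mul_zero]

lemma antid_integral (p : Polynomial ℝ) (t : ℝ) :
    ∫ s in (0:ℝ)..t, p.eval s = (antid p).eval t := by
  have hd : ∀ x ∈ Set.uIcc (0:ℝ) t, HasDerivAt (fun y => (antid p).eval y) (p.eval x) x := by
    intro x _
    have := (antid p).hasDerivAt x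
    rwa [antid_deriv] at this
  rw [intervalIntegral.integral_eq_sub_of_hasDerivAt hd
    (p.continuous_aeval.intervalIntegrable _ _), antid_eval_zero, sub_zero]


lemma unique {T : ℝ} (hT : 0 < T) {Q : ℕ → Polynomial ℝ}
    (hQdeg : ∀ k, (Q k).natDegree = k)
    (hQlead : ∀ k, 0 < (Q k).leadingCoeff)
    (hQorth : ∀ j k, ∫ x in (0:ℝ)..T, (Q j).eval x * (Q k).eval x = if j = k then 1 else 0) :
    ∀ k, Q k = Qh T k := by
  intro k
  have hhdeg : ∀ m, (Qh T m).natDegree = m := Qh_natDegree hT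
  have hhlead : ∀ m, 0 < (Qh T m).leadingCoeff := Qh_lead hT
  have hhorth := Qh_orth hT
  have hQc : 0 < (Q k).coeff k := coeff_pos' hQdeg hQlead k
  have hQhc : 0 < (Qh T k).coeff k := coeff_pos' hhdeg hhlead k
  set c := (Q k).coeff k / (Qh T k).coeff k with hc
  have hcpos : 0 < c := div_pos hQc hQhc
  set D := Q k - C c * Qh T k with hDdef
  have hDc : ∀ m, k ≤ m → D.coeff m = 0 := by
    intro m hm
    rcases eq_or_lt_of_le hm with rfl | hlt
    · simp only [hDdef, coeff_sub, coeff_C_mul, hc]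
      field_simp
      ring
    · have h1 : (Q k).coeff m = 0 := coeff_eq_zero_of_natDegree_lt (by rw [hQdeg]; omega)
      have h2 : (Qh T k).coeff m = 0 := coeff_eq_zero_of_natDegree_lt (by rw [hhdeg]; omega)
      simp [hDdef, coeff_sub, coeff_C_mul, h1, h2]
  have h1 : ∫ x in (0:ℝ)..T, D.eval x * (Q k).eval x = 0 :=
    orth_low hQdeg hQlead hQorth k D hDc k le_rfl
  have h2 : ∫ x in (0:ℝ)..T, D.eval x * (Qh T k).eval x = 0 :=
    orth_low hhdeg hhlead hhorth k D hDc k le_rfl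
  have h3 : ∫ x in (0:ℝ)..T, D.eval x * D.eval x = 0 := by
    have hsplit : ∫ x in (0:ℝ)..T, D.eval x * D.eval x
        = (∫ x in (0:ℝ)..T, D.eval x * (Q k).eval x)
          - c * ∫ x in (0:ℝ)..T, D.eval x * (Qh T k).eval x := by
      rw [← intervalIntegral.integral_const_mul,
        ← intervalIntegral.integral_sub (pint' D (Q k) 0 T) ((pint' D (Qh T k) 0 T).const_mul c)]
      congr 1; funext x
      simp only [hDdef, eval_sub, eval_mul, eval_C]; ring
    rw [hsplit, h1, h2]; ring
  have hD0 : D = 0 := sq_int_zero hT D h3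
  have hQeq : Q k = C c * Qh T k := by
    have := sub_eq_zero.mp hD0
    exact this
  have hc2 : c * c = 1 := by
    have horc := hQorth k k
    rw [if_pos rfl, hQeq] at horc
    have e : ∫ x in (0:ℝ)..T, (C c * Qh T k).eval x * (C c * Qh T k).eval x
        = c * c * ∫ x in (0:ℝ)..T, (Qh T k).eval x * (Qh T k).eval x := by
      rw [← intervalIntegral.integral_const_mul]
      congr 1; funext x
      simp only [eval_mul, eval_C]; ring
    rw [e, hhorth k k, if_pos rfl, mul_one] at horc
    exact horc
  have hc1 : c = 1 := by nlinarith
  rw [hQeq, hc1]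
  simp

lemma final_calc {T : ℝ} (hT : 0 < T) (k : ℕ) :
    nuc T k * ((2 * k).descFactorial k : ℝ) / ((k:ℝ)+1)
      / (nuc T (k+1) * ((2 * (k+1)).descFactorial (k+1) : ℝ))
    = T * (1 / (2 * Real.sqrt ((2 * (k : ℝ) + 1) * (2 * (k : ℝ) + 3)))) := by
  set a : ℝ := 2*(k:ℝ)+1 with ha
  set b : ℝ := 2*(k:ℝ)+3 with hb
  have hapos : 0 < a := by rw [ha]; positivity
  have hbpos : 0 < b := by rw [hb]; positivity
  set dk : ℝ := ((2 * k).descFactorial k : ℝ) with hdk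
  set dk1 : ℝ := ((2 * (k+1)).descFactorial (k+1) : ℝ) with hdk1
  have f1 : (k.factorial : ℝ) * dk = ((2*k).factorial : ℝ) := by
    rw [hdk, ← Nat.cast_mul]
    congr 1
    have := Nat.factorial_mul_descFactorial (show k ≤ 2*k by omega)
    rwa [show 2*k - k = k by omega] at this
  have f2 : ((k+1).factorial : ℝ) * dk1 = ((2*(k+1)).factorial : ℝ) := by
    rw [hdk1, ← Nat.cast_mul]
    congr 1
    have := Nat.factorial_mul_descFactorial (show k+1 ≤ 2*(k+1) by omega)
    rwa [show 2*(k+1) - (k+1) = k+1 by omega] at this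
  have hfacsucc : ((k+1).factorial : ℝ) = ((k:ℝ)+1) * (k.factorial : ℝ) := by
    push_cast [Nat.factorial_succ]; ring
  have hfac2 : ((2*(k+1)).factorial : ℝ) = (2*(k:ℝ)+2) * (2*(k:ℝ)+1) * ((2*k).factorial : ℝ) := by
    rw [show 2*(k+1) = (2*k+1)+1 by omega, Nat.factorial_succ, Nat.factorial_succ]
    push_cast; ring
  have hkf : (k.factorial : ℝ) ≠ 0 := by positivity
  have hk1 : ((k:ℝ)+1) ≠ 0 := by positivity
  have hdd : dk1 = 2 * a * dk := by
    have hfne : ((k+1).factorial : ℝ) ≠ 0 := by positivity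
    have e : ((k+1).factorial : ℝ) * dk1 = ((k+1).factorial:ℝ) * (2*a*dk) := by
      rw [f2, hfac2, hfacsucc, ← f1, ha]; ring
    exact mul_left_cancel₀ hfne e
  have hb' : 2*(((k+1):ℕ):ℝ)+1 = b := by push_cast [hb]; ring
  have hn1 : nuc T k = Real.sqrt a / Real.sqrt T / (T^k * (k.factorial:ℝ)) := by
    rw [nuc, ← ha, Real.sqrt_div hapos.le]
  have hn2 : nuc T (k+1) = Real.sqrt b / Real.sqrt T / (T^(k+1) * ((k+1).factorial:ℝ)) := by
    rw [nuc, hb', Real.sqrt_div hbpos.le]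
  have hsab : Real.sqrt (a*b) = Real.sqrt a * Real.sqrt b := Real.sqrt_mul hapos.le _
  have hsa : Real.sqrt a * Real.sqrt a = a := Real.mul_self_sqrt hapos.le
  have hsb : Real.sqrt b * Real.sqrt b = b := Real.mul_self_sqrt hbpos.le
  have hsap : 0 < Real.sqrt a := Real.sqrt_pos.mpr hapos
  have hsbp : 0 < Real.sqrt b := Real.sqrt_pos.mpr hbpos
  have hsTp : 0 < Real.sqrt T := Real.sqrt_pos.mpr hT
  have hdkp : 0 < dk := by
    rw [hdk]
    have : 0 < (2*k).descFactorial k :=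
      Nat.pos_of_ne_zero (by simp only [ne_eq, Nat.descFactorial_eq_zero_iff_lt]; omega)
    positivity
  have hTk : (0:ℝ) < T^k := by positivity
  rw [hn1, hn2, hdd, hsab, hfacsucc, pow_succ]
  have hsa' : Real.sqrt a ≠ 0 := ne_of_gt hsap
  have hsb' : Real.sqrt b ≠ 0 := ne_of_gt hsbp
  have hsT' : Real.sqrt T ≠ 0 := ne_of_gt hsTp
  have hdk' : dk ≠ 0 := ne_of_gt hdkp
  have hTk' : T^k ≠ 0 := ne_of_gt hTk
  have hT' : T ≠ 0 := ne_of_gt hT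
  have ha' : a ≠ 0 := ne_of_gt hapos
  field_simp
  linear_combination hsa


/-- Let `T > 0` and `(Q k)` the orthonormal polynomials on `[0,T]` (degree `k`,
positive leading coefficient). Then for every `k ≥ 0`,
`c_{k,k+1} = ∫₀ᵀ (∫₀ᵗ Q k) Q (k+1) dt = T · α k` with
`α k = 1/(2√((2k+1)(2k+3)))`. -/
theorem stmt_3 (T : ℝ) (hT : 0 < T)
    (Q : ℕ → Polynomial ℝ)
    (hQdeg : ∀ k, (Q k).natDegree = k)
    (hQlead : ∀ k, 0 < (Q k).leadingCoeff)
    (hQorth : ∀ j k, ∫ x in (0:ℝ)..T, (Q j).eval x * (Q k).eval x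
        = if j = k then 1 else 0) :
    ∀ k : ℕ, (∫ t in (0:ℝ)..T, (∫ s in (0:ℝ)..t, (Q k).eval s) * (Q (k + 1)).eval t)
        = T * (1 / (2 * Real.sqrt ((2 * (k : ℝ) + 1) * (2 * (k : ℝ) + 3)))) := by
  intro k
  have hQeq : ∀ m, Q m = Qh T m := unique hT hQdeg hQlead hQorth
  have hcong : (∫ t in (0:ℝ)..T, (∫ s in (0:ℝ)..t, (Q k).eval s) * (Q (k+1)).eval t)
      = ∫ t in (0:ℝ)..T, (antid (Q k)).eval t * (Q (k+1)).eval t := by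
    apply intervalIntegral.integral_congr
    intro t _
    show (∫ s in (0:ℝ)..t, (Q k).eval s) * (Q (k+1)).eval t
        = (antid (Q k)).eval t * (Q (k+1)).eval t
    rw [antid_integral]
  rw [hcong]
  have hdeg : (antid (Q k)).natDegree ≤ k + 1 := by
    have := antid_natDegree (Q k)
    rwa [hQdeg k] at this
  rw [coeff_int hQdeg hQlead hQorth (k+1) (antid (Q k)) hdeg]
  rw [antid_coeff (Q k) k (hQdeg k)]
  rw [hQeq k, hQeq (k+1), Qh_coeff, Qh_coeff]
  rw [div_div]
  rw [show nuc T k * ((2 * k).descFactorial k : ℝ) / (((k:ℝ) + 1) * (nuc T (k+1) * ((2 * (k+1)).descFactorial (k+1) : ℝ)))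
      = nuc T k * ((2 * k).descFactorial k : ℝ) / ((k:ℝ)+1) / (nuc T (k+1) * ((2 * (k+1)).descFactorial (k+1) : ℝ)) from by
    rw [div_div]]
  exact final_calc hT k


end Stmt3Aux
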